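/- (Discrete Cheeger inequality, easy direction) Let Γ be a finite connected nonempty d-regular graph with normalized Laplacian L_Γ and normalized spectral gap λ₁(Γ) (the smallest nonzero eigenvalue of L_Γ). Then λ₁(Γ) ≤ (2/d)·h(Γ), where h(Γ) is the edge expansion constant. -/

import Mathlib

open Finset

lemma ker_const' {V : Type*} [Fintype V] [DecidableEq V] [Nonempty V]
    (G : SimpleGraph V) [DecidableRel G.Adj] (hconn : G.Connected)
    (d : ℕ) (hreg : G.IsRegularOfDegree d)
    (g : V → ℝ) (hg : ∀ v, ∑ w ∈ G.neighborFinset v, g w = d * g v) :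
    ∀ v w, g v = g w := by
  obtain ⟨u₀, -, hmax⟩ := Finset.exists_max_image univ g ⟨Classical.arbitrary V, mem_univ _⟩
  have step : ∀ v, g v = g u₀ → ∀ w, G.Adj v w → g w = g u₀ := by
    intro v hv w hw
    have hcard : #(G.neighborFinset v) = d := hreg v
    have hsum : ∑ w' ∈ G.neighborFinset v, (g u₀ - g w') = 0 := by
      rw [Finset.sum_sub_distrib, Finset.sum_const, hcard, nsmul_eq_mul, hg v, hv]
      ring
    have := (Finset.sum_eq_zero_iff_of_nonneg
      (fun x _ => sub_nonneg.mpr (hmax x (mem_univ x)))).mp hsum w ((G.mem_neighborFinset v w).mpr hw)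
    linarith
  have key : ∀ (a b : V) (p : G.Walk a b), g a = g u₀ → g b = g u₀ := by
    intro a b p
    induction p with
    | nil => exact id
    | cons h q ih => intro ha; exact ih (step _ ha _ h)
  have all : ∀ v, g v = g u₀ := fun v => (hconn u₀ v).elim fun p => key u₀ v p rfl
  intro v w; rw [all v, all w]

lemma cheeger_numeric {x B k d : ℝ} (hk : 0 < k) (hd : 0 < d) (hB : 0 ≤ B)
    (h : x * (k / 2) ≤ B / d) : x ≤ 2 / d * (B / k) := by
  rcases le_or_gt x 0 with hx | hx
  · exact le_trans hx (mul_nonneg (div_nonneg (by norm_num) hd.le) (div_nonneg hB hk.le))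
  · rw [div_mul_div_comm, le_div_iff₀ (mul_pos hd hk)]
    have h3 := mul_le_mul_of_nonneg_right h hd.le
    rw [div_mul_cancel₀ _ (ne_of_gt hd)] at h3
    nlinarith

/-- Discrete Cheeger inequality (easy direction) for a `d`-regular connected graph:
the smallest nonzero eigenvalue `lam` of the normalized Laplacian
`L = 1 - (1/d)·A` satisfies `lam ≤ (2/d)·|E(W)|/|W|` for every nonempty
`W ⊆ V` with `|W| ≤ |V|/2`, i.e. `lam ≤ (2/d)·h(Γ)`.  The edge boundary is
counted via ordered pairs `(v, w)` with `v ∈ W`, `w ∉ W`, `v ∼ w`. -/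
theorem stmt7 {V : Type*} [Fintype V] [DecidableEq V] [Nonempty V]
    (G : SimpleGraph V) [DecidableRel G.Adj] (hconn : G.Connected)
    (d : ℕ) (hd : 0 < d) (hreg : G.IsRegularOfDegree d)
    (lam : ℝ)
    (heig : Module.End.HasEigenvalue
      (Matrix.toLin' ((1 : Matrix V V ℝ) - (d : ℝ)⁻¹ • G.adjMatrix ℝ)) lam)
    (hne : lam ≠ 0)
    (hmin : ∀ μ : ℝ, Module.End.HasEigenvalue
      (Matrix.toLin' ((1 : Matrix V V ℝ) - (d : ℝ)⁻¹ • G.adjMatrix ℝ)) μ → μ ≠ 0 → lam ≤ μ) :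
    ∀ W : Finset V, W.Nonempty → 2 * W.card ≤ Fintype.card V →
      lam ≤ (2 / d) *
        (((Finset.univ.filter
            (fun p : V × V => p.1 ∈ W ∧ p.2 ∉ W ∧ G.Adj p.1 p.2)).card : ℝ) / W.card) := by
  intro W hWne hW2
  -- notation
  set L : Matrix V V ℝ := (1 : Matrix V V ℝ) - (d : ℝ)⁻¹ • G.adjMatrix ℝ with hLdef
  set n : ℝ := (Fintype.card V : ℝ) with hndef
  set k : ℝ := (W.card : ℝ) with hkdef
  set B : ℝ := ((Finset.univ.filter
      (fun p : V × V => p.1 ∈ W ∧ p.2 ∉ W ∧ G.Adj p.1 p.2)).card : ℝ) with hBdef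
  have hd' : (0 : ℝ) < d := by exact_mod_cast hd
  have hk : (0 : ℝ) < k := by rw [hkdef]; exact_mod_cast Finset.card_pos.mpr hWne
  have hn : (0 : ℝ) < n := by rw [hndef]; exact_mod_cast Fintype.card_pos
  have h2k : 2 * k ≤ n := by rw [hkdef, hndef]; exact_mod_cast hW2
  have hB0 : (0 : ℝ) ≤ B := by positivity
  -- the test vector
  set f : EuclideanSpace ℝ V := WithLp.toLp 2 (fun v => (if v ∈ W then (1:ℝ) else 0) - k / n) with hfdef
  have hfv : ∀ v, f v = (if v ∈ W then (1:ℝ) else 0) - k / n := fun v => rfl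
  -- basic sums
  have hsum_ind : ∑ v, (if v ∈ W then (1:ℝ) else 0) = k := by
    rw [Finset.sum_boole, hkdef]
    congr 1
    simp [Finset.filter_mem_eq_inter]
  have hsumf : ∑ v, f v = 0 := by
    simp only [hfv]
    rw [Finset.sum_sub_distrib, hsum_ind, Finset.sum_const, Finset.card_univ, nsmul_eq_mul]
    field_simp
    simp [hndef]
  -- neighborhood sums
  set e : V → ℝ := fun v => ∑ w ∈ G.neighborFinset v, (if w ∈ W then (1:ℝ) else 0) with hedef
  have hdegcol : ∀ w, ∑ v, (if G.Adj v w then (1:ℝ) else 0) = d := by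
    intro w
    have h1 : (univ.filter (fun v => G.Adj v w)) = G.neighborFinset w := by
      ext x; simp [G.adj_comm]
    rw [Finset.sum_boole, h1]
    exact_mod_cast congrArg Nat.cast (hreg w)
  have hsum_e : ∑ v, e v = d * k := by
    simp only [hedef]
    have h1 : ∀ v, ∑ w ∈ G.neighborFinset v, (if w ∈ W then (1:ℝ) else 0)
        = ∑ w, (if G.Adj v w then (1:ℝ) else 0) * (if w ∈ W then 1 else 0) := by
      intro v
      rw [SimpleGraph.neighborFinset_eq_filter, Finset.sum_filter]
      exact Finset.sum_congr rfl fun w _ => by by_cases h : G.Adj v w <;> simp [h]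
    simp only [h1]
    rw [Finset.sum_comm]
    have h2 : ∀ w, ∑ v, (if G.Adj v w then (1:ℝ) else 0) * (if w ∈ W then 1 else 0)
        = d * (if w ∈ W then (1:ℝ) else 0) := by
      intro w
      rw [← Finset.sum_mul, hdegcol w]
    simp only [h2]
    rw [← Finset.mul_sum, hsum_ind]
  set Q : ℝ := ∑ v, (if v ∈ W then (1:ℝ) else 0) * e v with hQdef
  -- boundary count
  have hB : B = d * k - Q := by
    have hBsum : B = ∑ v, ∑ w, (if v ∈ W then (1:ℝ) else 0) *
        ((if G.Adj v w then (1:ℝ) else 0) * (1 - (if w ∈ W then 1 else 0))) := by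
      rw [hBdef, Finset.card_filter]
      push_cast
      rw [Fintype.sum_prod_type]
      refine Finset.sum_congr rfl fun v _ => Finset.sum_congr rfl fun w _ => ?_
      by_cases h1 : v ∈ W <;> by_cases h2 : w ∈ W <;> by_cases h3 : G.Adj v w <;>
        simp [h1, h2, h3]
    rw [hBsum]
    have h1 : ∀ v, ∑ w, (if v ∈ W then (1:ℝ) else 0) *
        ((if G.Adj v w then (1:ℝ) else 0) * (1 - (if w ∈ W then 1 else 0)))
        = (if v ∈ W then (1:ℝ) else 0) * d - (if v ∈ W then (1:ℝ) else 0) * e v := by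
      intro v
      rw [← Finset.mul_sum]
      have : ∑ w, (if G.Adj v w then (1:ℝ) else 0) * (1 - (if w ∈ W then 1 else 0))
          = d - e v := by
        have hrow : ∑ w, (if G.Adj v w then (1:ℝ) else 0) = d := by
          have h1 : (univ.filter (fun w => G.Adj v w)) = G.neighborFinset v := by
            ext x; simp
          rw [Finset.sum_boole, h1]
          exact_mod_cast congrArg Nat.cast (hreg v)
        have hev : e v = ∑ w, (if G.Adj v w then (1:ℝ) else 0) * (if w ∈ W then 1 else 0) := by
          rw [hedef]
          simp only
          rw [SimpleGraph.neighborFinset_eq_filter, Finset.sum_filter]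
          exact Finset.sum_congr rfl fun w _ => by by_cases h : G.Adj v w <;> simp [h]
        calc ∑ w, (if G.Adj v w then (1:ℝ) else 0) * (1 - (if w ∈ W then 1 else 0))
            = ∑ w, ((if G.Adj v w then (1:ℝ) else 0)
              - (if G.Adj v w then (1:ℝ) else 0) * (if w ∈ W then 1 else 0)) := by
              exact Finset.sum_congr rfl fun w _ => by ring
          _ = d - e v := by rw [Finset.sum_sub_distrib, hrow, hev]
      rw [this]; ring
    simp only [h1]
    rw [Finset.sum_sub_distrib, ← Finset.sum_mul, hsum_ind, ← hQdef]
    ring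
  -- spectral setup
  have hL : L.IsHermitian := by
    have h1 : (G.adjMatrix ℝ).IsHermitian := by
      unfold Matrix.IsHermitian
      rw [Matrix.conjTranspose_eq_transpose_of_trivial]
      exact G.isSymm_adjMatrix
    unfold Matrix.IsHermitian at h1 ⊢
    rw [Matrix.conjTranspose_eq_transpose_of_trivial] at h1
    rw [Matrix.conjTranspose_eq_transpose_of_trivial, hLdef, Matrix.transpose_sub,
      Matrix.transpose_one, Matrix.transpose_smul, h1]
  set T := Matrix.toEuclideanLin L with hTdef
  have hTsym : T.IsSymmetric := Matrix.isHermitian_iff_isSymmetric.mp hL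
  set b := hL.eigenvectorBasis with hbdef
  set μ := hL.eigenvalues with hmudef
  have hTb : ∀ i, T (b i) = μ i • b i := fun i => WithLp.ofLp_injective 2 (hL.mulVec_eigenvectorBasis i)
  have hLmul : ∀ (x : V → ℝ) (v : V), Matrix.mulVec L x v
      = x v - (d:ℝ)⁻¹ * ∑ w ∈ G.neighborFinset v, x w := by
    intro x v
    rw [hLdef, Matrix.sub_mulVec, Matrix.smul_mulVec, Matrix.one_mulVec]
    simp only [Pi.sub_apply, Pi.smul_apply, SimpleGraph.adjMatrix_mulVec_apply, smul_eq_mul]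
  have heigi : ∀ i, Module.End.HasEigenvalue (Matrix.toLin' L) (μ i) := by
    intro i
    apply Module.End.hasEigenvalue_of_hasEigenvector (x := ⇑(b i))
    constructor
    · rw [Module.End.mem_eigenspace_iff, Matrix.toLin'_apply]
      exact hL.mulVec_eigenvectorBasis i
    · exact fun h => hL.eigenvectorBasis.orthonormal.ne_zero i (WithLp.ofLp_injective 2 h)
  have hinner : ∀ x y : EuclideanSpace ℝ V, (inner ℝ x y : ℝ) = ∑ v, x v * y v := by
    intro x y
    simp [PiLp.inner_apply, RCLike.inner_apply, conj_trivial, mul_comm]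
  -- kernel coefficients vanish
  have hker0 : ∀ i, μ i = 0 → (inner ℝ (b i) f : ℝ) = 0 := by
    intro i hmu
    have hmv := hL.mulVec_eigenvectorBasis i
    rw [hmudef] at hmu
    rw [hmu, zero_smul] at hmv
    have hg : ∀ v, ∑ w ∈ G.neighborFinset v, (b i) w = d * (b i) v := by
      intro v
      have h1 := congrFun hmv v
      rw [hLmul] at h1
      simp only [Pi.zero_apply] at h1
      rw [← hbdef] at h1
      field_simp at h1
      linarith [h1]
    have hconst := ker_const' G hconn d hreg (fun v => (b i) v) hg
    rw [hinner]
    have hcc : ∀ v, (b i) v * f v = (b i) (Classical.arbitrary V) * f v := by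
      intro v
      have := hconst v (Classical.arbitrary V)
      simp only at this
      rw [this]
    rw [Finset.sum_congr rfl (fun v _ => hcc v), ← Finset.mul_sum, hsumf, mul_zero]
  -- Rayleigh quotient bound
  have hRay : lam * (inner ℝ f f : ℝ) ≤ (inner ℝ f (T f) : ℝ) := by
    rw [← OrthonormalBasis.sum_inner_mul_inner b f f,
      ← OrthonormalBasis.sum_inner_mul_inner b f (T f), Finset.mul_sum]
    apply Finset.sum_le_sum
    intro i _
    have h2 : (inner ℝ (b i) (T f) : ℝ) = μ i * inner ℝ (b i) f := by
      rw [← hTsym (b i) f, hTb i, real_inner_smul_left]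
    rw [h2]
    by_cases hmu : μ i = 0
    · rw [hker0 i hmu]; simp
    · have hle := hmin (μ i) (heigi i) hmu
      have hcomm : (inner ℝ f (b i) : ℝ) = inner ℝ (b i) f := real_inner_comm _ _
      rw [hcomm]
      nlinarith [hle, sq_nonneg ((inner ℝ (b i) f : ℝ))]
  -- compute the two inner ℝ products
  have hff : (inner ℝ f f : ℝ) = k - k^2/n := by
    rw [hinner]
    have h1 : ∀ v, f v * f v
        = (if v ∈ W then (1:ℝ) else 0) * (1 - 2*(k/n)) + (k/n)^2 := by
      intro v; rw [hfv]; by_cases h : v ∈ W <;> simp [h] <;> ring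
    simp only [h1]
    rw [Finset.sum_add_distrib, ← Finset.sum_mul, hsum_ind, Finset.sum_const,
      Finset.card_univ, nsmul_eq_mul, ← hndef]
    field_simp
    ring
  have hTfv : ∀ v, (T f) v = (if v ∈ W then (1:ℝ) else 0) - (d:ℝ)⁻¹ * e v := by
    intro v
    show Matrix.mulVec L (f : V → ℝ) v = _
    rw [hLmul]
    have h1 : ∑ w ∈ G.neighborFinset v, f w = e v - d * (k/n) := by
      simp only [hfv, hedef]
      rw [Finset.sum_sub_distrib, Finset.sum_const,
        show #(G.neighborFinset v) = d from hreg v, nsmul_eq_mul]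
    rw [hfv, h1, mul_sub, inv_mul_cancel_left₀ (ne_of_gt hd')]
    ring
  have hfT : (inner ℝ f (T f) : ℝ) = B / d := by
    rw [hinner]
    have h1 : ∀ v, f v * (T f) v
        = (if v ∈ W then (1:ℝ) else 0) * (if v ∈ W then (1:ℝ) else 0)
          - (d:ℝ)⁻¹ * ((if v ∈ W then (1:ℝ) else 0) * e v)
          - (k/n) * (if v ∈ W then (1:ℝ) else 0) + (k/n) * ((d:ℝ)⁻¹ * e v) := by
      intro v; rw [hfv, hTfv v]; ring
    simp only [h1]
    have h2 : ∀ v, (if v ∈ W then (1:ℝ) else 0) * (if v ∈ W then (1:ℝ) else 0)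
        = (if v ∈ W then (1:ℝ) else 0) := by
      intro v; by_cases h : v ∈ W <;> simp [h]
    simp only [h2]
    rw [Finset.sum_add_distrib, Finset.sum_sub_distrib, Finset.sum_sub_distrib,
      ← Finset.mul_sum, ← Finset.mul_sum, ← Finset.mul_sum, ← hQdef, hsum_ind]
    rw [← Finset.mul_sum, hsum_e, hB]
    field_simp
    ring
  -- final numeric step
  rw [hff, hfT] at hRay
  have hphi : k/2 ≤ k - k^2/n := by
    have h4 : k^2/n ≤ k/2 := by
      rw [div_le_div_iff₀ hn (by norm_num : (0:ℝ) < 2)]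
      nlinarith [mul_le_mul_of_nonneg_left h2k (le_of_lt hk)]
    linarith
  have hkey : lam * (k/2) ≤ B/d := by
    rcases le_or_gt lam 0 with hlam | hlam
    · exact le_trans (mul_nonpos_of_nonpos_of_nonneg hlam (by linarith))
        (div_nonneg hB0 (le_of_lt hd'))
    · exact le_trans (mul_le_mul_of_nonneg_left hphi (le_of_lt hlam)) hRay
  exact cheeger_numeric hk hd' hB0 hkey
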